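/- Let δ > 0, σ > 0, and define G(x) = ∫₀ˣ ds/(1 + δ s^σ) for x ≥ 0. If U is a solution of the G-AL lattice on [0,T_f], then the quantity P_δ(U(t)) = ∑_{n∈ℤ} G(|U_n(t)|²) is conserved: P_δ(U(t)) = P_δ(U(0)) for all t ∈ [0,T_f]. (For δ = 1 this quantity equals ∑_{n∈ℤ} |U_n|² · ₂F₁(1, 1/σ, 1 + 1/σ; −|U_n|²), the conserved quantity of the G-AL system expressed through the Gauss hypergeometric function.) -/

import Mathlib

set_option maxHeartbeats 1000000

noncomputable section

open Set MeasureTheory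

/-- The sequence space ℓ²(ℤ,ℂ). -/
abbrev Seq2 := lp (fun _ : ℤ => ℂ) 2


/-- `U` is a solution of the generalised Ablowitz–Ladik (G-AL) lattice on `[0,Tf]`:
a continuously differentiable curve into ℓ²(ℤ,ℂ) satisfying
`i dU_n/dt = (U_{n+1} − 2U_n + U_{n−1}) + δ|U_n|^{2σ}(U_{n+1} + U_{n−1})` componentwise. -/
def IsGALSolution (δ σ Tf : ℝ) (U : ℝ → Seq2) : Prop :=
  ∃ Udot : ℝ → Seq2, ContinuousOn Udot (Icc 0 Tf) ∧
    ∀ t ∈ Icc (0:ℝ) Tf,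
      HasDerivWithinAt U (Udot t) (Icc 0 Tf) t ∧
      ∀ n : ℤ, Complex.I * Udot t n =
        (U t (n+1) - 2 * U t n + U t (n-1))
          + (δ : ℂ) * ((‖U t n‖) ^ (2*σ) : ℝ) * (U t (n+1) + U t (n-1))


/-- `G(x) = ∫₀ˣ ds/(1 + δ s^σ)`. -/
def Gfun (δ σ : ℝ) (x : ℝ) : ℝ := ∫ s in (0:ℝ)..x, 1 / (1 + δ * s ^ σ)

/- ### Auxiliary lemmas -/

lemma GAL.denom_pos {δ σ : ℝ} (hδ : 0 < δ) {s : ℝ} (hs : 0 ≤ s) : (0:ℝ) < 1 + δ * s ^ σ := by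
  have h1 : (0:ℝ) ≤ s ^ σ := Real.rpow_nonneg hs σ
  nlinarith

lemma GAL.integrand_contAt {δ σ : ℝ} (hδ : 0 < δ) (hσ : 0 < σ) {s : ℝ} (hs : 0 ≤ s) :
    ContinuousAt (fun s : ℝ => 1 / (1 + δ * s ^ σ)) s := by
  have h1 : ContinuousAt (fun s : ℝ => s ^ σ) s := Real.continuousAt_rpow_const s σ (Or.inr hσ.le)
  exact continuousAt_const.div (continuousAt_const.add (continuousAt_const.mul h1))
    (GAL.denom_pos hδ hs).ne'

lemma GAL.integrand_intble {δ σ : ℝ} (hδ : 0 < δ) (hσ : 0 < σ) {x : ℝ} (hx : 0 ≤ x) :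
    IntervalIntegrable (fun s : ℝ => 1 / (1 + δ * s ^ σ)) volume 0 x := by
  apply ContinuousOn.intervalIntegrable
  intro s hs
  rw [uIcc_of_le hx] at hs
  exact (GAL.integrand_contAt hδ hσ hs.1).continuousWithinAt

lemma GAL.Gfun_hasDerivAt {δ σ : ℝ} (hδ : 0 < δ) (hσ : 0 < σ) {x : ℝ} (hx : 0 ≤ x) :
    HasDerivAt (Gfun δ σ) (1 / (1 + δ * x ^ σ)) x := by
  have hm : Measurable (fun s : ℝ => 1 / (1 + δ * s ^ σ)) := by
    apply Measurable.div measurable_const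
    exact (measurable_const.add (measurable_const.mul (measurable_id.pow_const σ)))
  exact intervalIntegral.integral_hasDerivAt_right (GAL.integrand_intble hδ hσ hx)
    ⟨univ, Filter.univ_mem, hm.aestronglyMeasurable.restrict⟩ (GAL.integrand_contAt hδ hσ hx)

lemma GAL.Gfun_nonneg {δ σ : ℝ} (hδ : 0 < δ) {x : ℝ} (hx : 0 ≤ x) : 0 ≤ Gfun δ σ x := by
  apply intervalIntegral.integral_nonneg hx
  intro s hs
  have := GAL.denom_pos hδ (σ := σ) hs.1
  positivity

lemma GAL.Gfun_le {δ σ : ℝ} (hδ : 0 < δ) (hσ : 0 < σ) {x : ℝ} (hx : 0 ≤ x) : Gfun δ σ x ≤ x := by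
  have h := intervalIntegral.integral_mono_on hx (GAL.integrand_intble hδ hσ hx)
    (_root_.intervalIntegrable_const (c := (1:ℝ))) (fun s hs => by
      rw [div_le_one (GAL.denom_pos hδ hs.1)]
      have h1 : (0:ℝ) ≤ s ^ σ := Real.rpow_nonneg hs.1 σ
      have : (0:ℝ) ≤ δ * s ^ σ := by positivity
      linarith)
  simpa [Gfun] using h

lemma GAL.key_re (u wp wm u' : ℂ) (c : ℝ)
    (h : Complex.I * u' = (wp - 2*u + wm) + (c:ℂ) * (wp + wm)) :
    ((starRingEnd ℂ) u * u').re = (1 + c) * ((starRingEnd ℂ) u * (wp + wm)).im := by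
  have hu' : u' = -Complex.I * ((wp - 2*u + wm) + (c:ℂ) * (wp + wm)) := by
    have h2 := congrArg (fun z => -Complex.I * z) h
    simp only [← mul_assoc, neg_mul, Complex.I_mul_I, neg_neg, one_mul] at h2
    linear_combination h2
  rw [hu']
  simp only [Complex.mul_re, Complex.mul_im, Complex.neg_re, Complex.neg_im, Complex.I_re,
    Complex.I_im, Complex.add_re, Complex.add_im, Complex.sub_re, Complex.sub_im,
    Complex.ofReal_re, Complex.ofReal_im, Complex.conj_re, Complex.conj_im, Complex.re_ofNat,
    Complex.im_ofNat]
  ring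

def GAL.evalCLM (n : ℤ) : Seq2 →L[ℂ] ℂ :=
  LinearMap.mkContinuous
    { toFun := fun f => f n, map_add' := fun f g => rfl, map_smul' := fun c f => rfl } 1
    (fun f => by rw [one_mul]; exact lp.norm_apply_le_norm (by norm_num) f n)

lemma GAL.sq_summable (f : Seq2) : Summable fun n => ‖f n‖^2 := by
  have h := (lp.memℓp f).summable (p := 2) (by norm_num)
  have e : ∀ n : ℤ, ‖f n‖ ^ ((2:ENNReal).toReal) = ‖f n‖^2 := by
    intro n
    rw [show ((2:ENNReal).toReal) = ((2:ℕ):ℝ) by norm_num, Real.rpow_natCast]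
  simpa [e] using h

lemma GAL.sq_tsum_eq (f : Seq2) : ∑' n : ℤ, ‖f n‖^2 = ‖f‖^2 := by
  have h := lp.norm_rpow_eq_tsum (p := 2) (by norm_num) f
  have e : ∀ x : ℝ, x ^ ((2:ENNReal).toReal) = x^2 := fun x => by
    rw [show ((2:ENNReal).toReal) = ((2:ℕ):ℝ) by norm_num, Real.rpow_natCast]
  simp only [e] at h
  exact h.symm

lemma GAL.coord_hasDerivWithinAt {U : ℝ → Seq2} {V : Seq2} {s : Set ℝ} {t : ℝ}
    (h : HasDerivWithinAt U V s t) (n : ℤ) :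
    HasDerivWithinAt (fun r => U r n) (V n) s t :=
  ((GAL.evalCLM n).restrictScalars ℝ).hasFDerivAt.comp_hasDerivWithinAt t h

lemma GAL.absSq_hasDerivWithinAt {u : ℝ → ℂ} {u' : ℂ} {s : Set ℝ} {t : ℝ}
    (h : HasDerivWithinAt u u' s t) :
    HasDerivWithinAt (fun r => ‖u r‖ ^ 2)
      (2 * ((starRingEnd ℂ) (u t) * u').re) s t := by
  have hre : HasDerivWithinAt (fun r => (u r).re) u'.re s t :=
    Complex.reCLM.hasFDerivAt.comp_hasDerivWithinAt t h
  have him : HasDerivWithinAt (fun r => (u r).im) u'.im s t :=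
    Complex.imCLM.hasFDerivAt.comp_hasDerivWithinAt t h
  have H := (hre.mul hre).add (him.mul him)
  have e : ∀ r, ‖u r‖ ^ 2 = (u r).re * (u r).re + (u r).im * (u r).im := by
    intro r; rw [← Complex.normSq_apply, Complex.sq_norm]
  have := H.congr (fun r _ => e r) (e t)
  refine this.congr_deriv ?_
  simp only [Complex.mul_re, Complex.conj_re, Complex.conj_im]
  ring

lemma GAL.im_bound (z w : ℂ) : ‖2 * ((starRingEnd ℂ) z * w).im‖ ≤ 2 * (‖z‖ * ‖w‖) := by
  rw [norm_mul, Real.norm_eq_abs, Real.norm_eq_abs]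
  have h1 : |((starRingEnd ℂ) z * w).im| ≤ ‖(starRingEnd ℂ) z * w‖ :=
    Complex.abs_im_le_norm _
  rw [norm_mul, Complex.norm_conj] at h1
  have h2 : |(2:ℝ)| = 2 := by norm_num
  rw [h2]
  have := mul_le_mul_of_nonneg_left h1 (by norm_num : (0:ℝ) ≤ 2)
  simpa using this

lemma GAL.telescope (u : Seq2) :
    ∑' n : ℤ, 2 * ((starRingEnd ℂ) (u n) * (u (n+1) + u (n-1))).im = 0 := by
  set a : ℤ → ℝ := fun n => 2 * ((starRingEnd ℂ) (u n) * (u (n+1))).im with ha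
  have hshift : Summable (fun n : ℤ => ‖u (n+1)‖^2) :=
    (GAL.sq_summable u).comp_injective (add_left_injective 1)
  have hsa : Summable a := by
    apply Summable.of_norm
    refine Summable.of_nonneg_of_le (fun n => norm_nonneg _) (fun n => ?_)
      ((GAL.sq_summable u).add hshift)
    have h1 := GAL.im_bound (u n) (u (n+1))
    nlinarith [sq_nonneg (‖u n‖ - ‖u (n+1)‖), norm_nonneg (u n), norm_nonneg (u (n+1))]
  have hsa' : Summable (fun n : ℤ => a (n-1)) :=
    hsa.comp_injective (fun x y hxy => by omega)
  have hterm : ∀ n : ℤ, 2 * ((starRingEnd ℂ) (u n) * (u (n+1) + u (n-1))).im = a n - a (n-1) := by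
    intro n
    have key : ((starRingEnd ℂ) (u n) * u (n-1)).im = -(((starRingEnd ℂ) (u (n-1))) * u n).im := by
      have e1 : (starRingEnd ℂ) (u n) * u (n-1)
          = (starRingEnd ℂ) ((starRingEnd ℂ) (u (n-1)) * u n) := by
        rw [map_mul, Complex.conj_conj, mul_comm]
      rw [e1, Complex.conj_im]
    have e2 : (n : ℤ) - 1 + 1 = n := by ring
    simp only [ha, e2, mul_add, Complex.add_im]
    rw [key]; ring
  rw [tsum_congr hterm, Summable.tsum_sub hsa hsa']
  have e3 : ∑' n : ℤ, a (n-1) = ∑' n : ℤ, a n := by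
    have := (Equiv.subRight (1:ℤ)).tsum_eq a
    simpa [Equiv.subRight] using this
  rw [e3, sub_self]

/- ### Main theorem -/

/-- Conservation of the quantity `P_δ(U(t)) = ∑_{n∈ℤ} G(|U_n(t)|²)`,
where `G(x) = ∫₀ˣ ds/(1 + δ s^σ)`, along solutions of the G-AL lattice.
(For δ = 1 this is the conserved quantity expressed via the Gauss
hypergeometric function ₂F₁(1, 1/σ, 1 + 1/σ; −|U_n|²).) -/
theorem gal_deformed_quantity_conserved (δ σ Tf : ℝ) (hδ : 0 < δ) (hσ : 0 < σ)
    (U : ℝ → Seq2) (hU : IsGALSolution δ σ Tf U) :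
    ∀ t ∈ Icc (0:ℝ) Tf,
      (∑' n : ℤ, Gfun δ σ ((‖U t n‖)^2))
        = ∑' n : ℤ, Gfun δ σ ((‖U 0 n‖)^2) := by
  obtain ⟨V, hVcont, hODE⟩ := hU
  intro t ht
  obtain ⟨ht0, htT⟩ := ht
  have hTf : (0:ℝ) ≤ Tf := le_trans ht0 htT
  have htmem : t ∈ Icc (0:ℝ) Tf := ⟨ht0, htT⟩
  have h0mem : (0:ℝ) ∈ Icc (0:ℝ) Tf := left_mem_Icc.mpr hTf
  set g : ℤ → ℝ → ℝ := fun n s => Gfun δ σ ((‖U s n‖)^2) with hgdef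
  set h : ℤ → ℝ → ℝ :=
    fun n s => 2 * ((starRingEnd ℂ) (U s n) * (U s (n+1) + U s (n-1))).im with hhdef
  -- continuity facts
  have hUcont : ContinuousOn U (Icc 0 Tf) := fun s hs => ((hODE s hs).1).continuousWithinAt
  have hcoord : ∀ n : ℤ, ContinuousOn (fun s => (U s n : ℂ)) (Icc 0 Tf) := fun n =>
    ((GAL.evalCLM n).restrictScalars ℝ).continuous.comp_continuousOn hUcont
  have hhcont : ∀ n : ℤ, ContinuousOn (h n) (Icc 0 Tf) := by
    intro n
    apply ContinuousOn.mul continuousOn_const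
    apply Complex.continuous_im.comp_continuousOn
    exact ((hcoord n).star.mul ((hcoord (n+1)).add (hcoord (n-1))))
  -- derivative of g n
  have hgderiv : ∀ n : ℤ, ∀ s ∈ Icc (0:ℝ) Tf,
      HasDerivWithinAt (g n) (h n s) (Icc 0 Tf) s := by
    intro n s hs
    obtain ⟨hUd, hEq⟩ := hODE s hs
    have hx : (0:ℝ) ≤ (‖U s n‖)^2 := sq_nonneg _
    have h2 := GAL.absSq_hasDerivWithinAt (GAL.coord_hasDerivWithinAt hUd n)
    have h3 := (GAL.Gfun_hasDerivAt hδ hσ hx).comp_hasDerivWithinAt s h2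
    have hrw : ((‖U s n‖)^2) ^ σ = ‖U s n‖ ^ (2*σ) := by
      rw [← Real.rpow_natCast (‖U s n‖) 2,
        ← Real.rpow_mul (norm_nonneg _)]
      norm_num
    have hkey := GAL.key_re (U s n) (U s (n+1)) (U s (n-1)) (V s n)
      (δ * ‖U s n‖ ^ (2*σ)) (by push_cast; exact hEq n)
    have hc0 : (0:ℝ) ≤ ‖U s n‖ ^ (2*σ) :=
      Real.rpow_nonneg (norm_nonneg _) _
    have hcpos : (0:ℝ) < 1 + δ * ‖U s n‖ ^ (2*σ) := by nlinarith
    refine h3.congr_deriv ?_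
    symm
    show 2 * ((starRingEnd ℂ) ((U s) n) * ((U s) (n+1) + (U s) (n-1))).im = _
    rw [hrw, hkey]
    generalize ((starRingEnd ℂ) ((U s) n) * ((U s) (n+1) + (U s) (n-1))).im = y
    generalize hr : ‖(U s) n‖ ^ (2*σ) = r
    rw [hr] at hcpos
    field_simp
  -- FTC for each coordinate
  have hFTC : ∀ n : ℤ, ∫ s in (0:ℝ)..t, h n s = g n t - g n 0 := by
    intro n
    apply intervalIntegral.integral_eq_sub_of_hasDerivAt_of_le ht0
    · intro s hs
      exact ((hgderiv n s ⟨hs.1, hs.2.trans htT⟩).continuousWithinAt).mono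
        (Icc_subset_Icc_right htT)
    · intro x hx
      exact (hgderiv n x ⟨hx.1.le, (hx.2.le.trans htT)⟩).hasDerivAt
        (Icc_mem_nhds hx.1 (lt_of_lt_of_le hx.2 htT))
    · apply ContinuousOn.intervalIntegrable
      rw [uIcc_of_le ht0]
      exact (hhcont n).mono (Icc_subset_Icc_right htT)
  -- uniform bound
  obtain ⟨s₀, hs₀, hMax⟩ := isCompact_Icc.exists_isMaxOn (f := fun s => ‖U s‖) ⟨0, h0mem⟩
    (continuous_norm.comp_continuousOn hUcont)
  set M := ‖U s₀‖ with hMdef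
  have hM : ∀ y ∈ Icc (0:ℝ) Tf, ‖U y‖ ≤ M := fun y hy => hMax hy
  -- summability and bound of the telescoping series
  have hsq : ∀ s : ℝ, Summable (fun n : ℤ => ‖U s n‖^2) := fun s => GAL.sq_summable (U s)
  have hsqp : ∀ s : ℝ, Summable (fun n : ℤ => ‖U s (n+1)‖^2) := fun s =>
    (hsq s).comp_injective (add_left_injective 1)
  have hsqm : ∀ s : ℝ, Summable (fun n : ℤ => ‖U s (n-1)‖^2) := fun s =>
    (hsq s).comp_injective (fun x y hxy => by omega)
  have hptb : ∀ s : ℝ, ∀ n : ℤ,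
      ‖h n s‖ ≤ 2*‖U s n‖^2 + ‖U s (n+1)‖^2 + ‖U s (n-1)‖^2 := by
    intro s n
    have h1 := GAL.im_bound (U s n) (U s (n+1) + U s (n-1))
    have h2 : ‖(U s (n+1) : ℂ) + U s (n-1)‖ ≤ ‖(U s (n+1) : ℂ)‖ + ‖(U s (n-1) : ℂ)‖ :=
      norm_add_le _ _
    have h3 : ‖h n s‖ ≤ 2 * (‖(U s n : ℂ)‖ * (‖(U s (n+1) : ℂ)‖ + ‖(U s (n-1) : ℂ)‖)) := by
      refine h1.trans ?_
      have := norm_nonneg (U s n : ℂ)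
      nlinarith
    nlinarith [sq_nonneg (‖(U s n : ℂ)‖ - ‖(U s (n+1) : ℂ)‖),
      sq_nonneg (‖(U s n : ℂ)‖ - ‖(U s (n-1) : ℂ)‖), norm_nonneg (U s n : ℂ),
      norm_nonneg (U s (n+1) : ℂ), norm_nonneg (U s (n-1) : ℂ)]
  have hbsum : ∀ s : ℝ,
      Summable (fun n : ℤ => 2*‖U s n‖^2 + ‖U s (n+1)‖^2 + ‖U s (n-1)‖^2) := fun s =>
    (((hsq s).mul_left 2).add (hsqp s)).add (hsqm s)
  have hhsummable : ∀ s : ℝ, Summable (fun n : ℤ => ‖h n s‖) := fun s =>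
    Summable.of_nonneg_of_le (fun n => norm_nonneg _) (hptb s) (hbsum s)
  have hhtsum_le : ∀ s ∈ Icc (0:ℝ) Tf, ∑' n : ℤ, ‖h n s‖ ≤ 4 * M^2 := by
    intro s hs
    have e1 : ∑' n : ℤ, ‖U s (n+1)‖^2 = ∑' n : ℤ, ‖U s n‖^2 := by
      have := (Equiv.addRight (1:ℤ)).tsum_eq (fun n => ‖U s n‖^2)
      simpa [Equiv.addRight] using this
    have e2 : ∑' n : ℤ, ‖U s (n-1)‖^2 = ∑' n : ℤ, ‖U s n‖^2 := by
      have := (Equiv.subRight (1:ℤ)).tsum_eq (fun n => ‖U s n‖^2)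
      simpa [Equiv.subRight] using this
    have step : ∑' n : ℤ, (2*‖U s n‖^2 + ‖U s (n+1)‖^2 + ‖U s (n-1)‖^2)
        = 4 * ‖U s‖^2 := by
      rw [Summable.tsum_add (((hsq s).mul_left 2).add (hsqp s)) (hsqm s),
        Summable.tsum_add ((hsq s).mul_left 2) (hsqp s), tsum_mul_left, e1, e2,
        GAL.sq_tsum_eq (U s)]
      ring
    have hMs : ‖U s‖ ≤ M := hM s hs
    calc ∑' n : ℤ, ‖h n s‖
        ≤ ∑' n : ℤ, (2*‖U s n‖^2 + ‖U s (n+1)‖^2 + ‖U s (n-1)‖^2) :=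
          Summable.tsum_le_tsum (hptb s) (hhsummable s) (hbsum s)
      _ = 4 * ‖U s‖^2 := step
      _ ≤ 4 * M^2 := by nlinarith [norm_nonneg (U s)]
  -- pointwise vanishing
  have hzero : ∀ s : ℝ, ∑' n : ℤ, h n s = 0 := fun s => GAL.telescope (U s)
  -- interchange of sum and integral
  have hsub : Ioc (0:ℝ) t ⊆ Icc (0:ℝ) Tf := fun s hs => ⟨hs.1.le, hs.2.trans htT⟩
  have hmeas : ∀ n : ℤ, AEStronglyMeasurable (h n) (volume.restrict (Ioc (0:ℝ) t)) := fun n =>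
    ContinuousOn.aestronglyMeasurable ((hhcont n).mono hsub) measurableSet_Ioc
  have hswap : ∑' n : ℤ, ∫ s in Ioc (0:ℝ) t, h n s = ∫ s in Ioc (0:ℝ) t, ∑' n : ℤ, h n s := by
    refine (MeasureTheory.integral_tsum hmeas ?_).symm
    rw [← lintegral_tsum (fun n => (hmeas n).enorm)]
    have hb : ∀ s ∈ Ioc (0:ℝ) t, (∑' n : ℤ, (‖h n s‖₊ : ENNReal)) ≤ ENNReal.ofReal (4*M^2) := by
      intro s hs
      have e4 : (∑' n : ℤ, (‖h n s‖₊ : ENNReal)) = ENNReal.ofReal (∑' n : ℤ, ‖h n s‖) := by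
        rw [ENNReal.ofReal_tsum_of_nonneg (fun n => norm_nonneg _) (hhsummable s)]
        exact tsum_congr fun n => (ofReal_norm_eq_enorm _).symm
      rw [e4]
      exact ENNReal.ofReal_le_ofReal (hhtsum_le s (hsub hs))
    have hlt : ∫⁻ s in Ioc (0:ℝ) t, ∑' n : ℤ, (‖h n s‖₊ : ENNReal) < ⊤ := by
      calc ∫⁻ s in Ioc (0:ℝ) t, ∑' n : ℤ, (‖h n s‖₊ : ENNReal)
          ≤ ∫⁻ _ in Ioc (0:ℝ) t, ENNReal.ofReal (4*M^2) := by
            apply lintegral_mono_ae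
            filter_upwards [ae_restrict_mem measurableSet_Ioc] with s hs
            exact hb s hs
        _ = ENNReal.ofReal (4*M^2) * volume (Ioc (0:ℝ) t) := setLIntegral_const _ _
        _ < ⊤ := ENNReal.mul_lt_top ENNReal.ofReal_lt_top measure_Ioc_lt_top
    exact hlt.ne
  -- summability of the conserved sums
  have hsum_g : ∀ s : ℝ, Summable (fun n : ℤ => g n s) := by
    intro s
    refine Summable.of_nonneg_of_le (fun n => GAL.Gfun_nonneg hδ (sq_nonneg _))
      (fun n => ?_) (hsq s)
    have := GAL.Gfun_le hδ hσ (sq_nonneg (‖U s n‖))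
    simpa using this
  -- final calculation
  have hmain : (∑' n : ℤ, g n t) - (∑' n : ℤ, g n 0) = 0 := by
    calc (∑' n : ℤ, g n t) - (∑' n : ℤ, g n 0)
        = ∑' n : ℤ, (g n t - g n 0) := (Summable.tsum_sub (hsum_g t) (hsum_g 0)).symm
      _ = ∑' n : ℤ, ∫ s in (0:ℝ)..t, h n s := tsum_congr fun n => (hFTC n).symm
      _ = ∑' n : ℤ, ∫ s in Ioc (0:ℝ) t, h n s := tsum_congr fun n => by
          rw [intervalIntegral.integral_of_le ht0]
      _ = ∫ s in Ioc (0:ℝ) t, ∑' n : ℤ, h n s := hswap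
      _ = 0 := by simp [hzero]
  have : (∑' n : ℤ, g n t) = ∑' n : ℤ, g n 0 := by linarith
  exact this
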